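/- Let G be an undirected simple graph with distinguished vertices s and t, and let T be a tracking set for G (a set of vertices such that any two distinct s-t paths yield different sequences of vertices of T). Then T is a feedback vertex set of the subgraph of G induced by the vertices and edges that participate in at least one s-t path; i.e., deleting T from that subgraph leaves an acyclic graph. -/

import Mathlib

open SimpleGraph Walk

private lemma walk_end_mem_tail {V : Type*} {G : SimpleGraph V} {u : V}
    (p : G.Walk u u) (hp : p ≠ SimpleGraph.Walk.nil) : u ∈ p.support.tail := by
  cases p with
  | nil => exact absurd rfl hp
  | cons h q =>
    rw [Walk.support_cons]
    exact q.end_mem_support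

private lemma first_split {V : Type*} {G : SimpleGraph V} (pr : V → Prop) [DecidablePred pr] :
    ∀ {u t : V} (w : G.Walk u t), (∃ x ∈ w.support, pr x) →
      ∃ a, pr a ∧ ∃ (w1 : G.Walk u a) (w2 : G.Walk a t),
        w = w1.append w2 ∧ ∀ x ∈ w1.support, pr x → x = a := by
  intro u t w
  induction w with
  | nil =>
    intro hx
    obtain ⟨y, hy1, hy2⟩ := hx
    simp only [Walk.support_nil, List.mem_singleton] at hy1
    subst hy1
    exact ⟨_, hy2, Walk.nil, Walk.nil, rfl, by simp⟩
  | @cons u v t h q ih =>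
    intro hx
    by_cases hpu : pr u
    · refine ⟨u, hpu, Walk.nil, Walk.cons h q, rfl, ?_⟩
      simp only [Walk.support_nil, List.mem_singleton]
      rintro x rfl _
      rfl
    · obtain ⟨a, hpa, w1, w2, heq, hcond⟩ := ih (by
        obtain ⟨y, hy1, hy2⟩ := hx
        simp only [Walk.support_cons, List.mem_cons] at hy1
        rcases hy1 with rfl | hy1
        · exact absurd hy2 hpu
        · exact ⟨y, hy1, hy2⟩)
      refine ⟨a, hpa, Walk.cons h w1, w2, by rw [heq, Walk.cons_append], ?_⟩
      intro x hxs hpx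
      simp only [Walk.support_cons, List.mem_cons] at hxs
      rcases hxs with rfl | hxs
      · exact absurd hpx hpu
      · exact hcond x hxs hpx

private lemma last_split {V : Type*} {G : SimpleGraph V} (pr : V → Prop) [DecidablePred pr]
    {u t : V} (w : G.Walk u t) (hx : ∃ x ∈ w.support, pr x) :
    ∃ b, pr b ∧ ∃ (w1 : G.Walk u b) (w2 : G.Walk b t),
      w = w1.append w2 ∧ ∀ x ∈ w2.support, pr x → x = b := by
  obtain ⟨a, hpa, r1, r2, hre, hcond⟩ := first_split pr w.reverse
    (by simpa [Walk.support_reverse] using hx)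
  refine ⟨a, hpa, r2.reverse, r1.reverse, ?_, ?_⟩
  · have h2 := congrArg Walk.reverse hre
    rwa [Walk.reverse_reverse, Walk.reverse_append] at h2
  · intro x hxs hpx
    exact hcond x (by simpa [Walk.support_reverse] using hxs) hpx

/-- A tracking set for an s-t graph: any two distinct s-t paths yield different
sequences of vertices of `T`. -/
def IsTrackingSet {V : Type*} [DecidableEq V] (G : SimpleGraph V) (s t : V)
    (T : Finset V) : Prop :=
  ∀ p q : G.Path s t,
    p.1.support.filter (· ∈ T) = q.1.support.filter (· ∈ T) → p = q

/-- A tracking set is a feedback vertex set of the subgraph of `G`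
consisting of the vertices and edges participating in some s-t path. -/
theorem tracking_set_is_fvs {V : Type*} [DecidableEq V] (G : SimpleGraph V)
    (s t : V) (T : Finset V) (hT : IsTrackingSet G s t T) :
    ((SimpleGraph.fromEdgeSet
        {e | e ∈ G.edgeSet ∧ ∃ p : G.Path s t, e ∈ p.1.edges}).induce
      {v : V | v ∉ T}).IsAcyclic := by
  classical
  set S : Set (Sym2 V) := {e | e ∈ G.edgeSet ∧ ∃ p : G.Path s t, e ∈ p.1.edges} with hSdef
  intro x c hc
  -- the homomorphism from the induced subgraph to G
  let f : ((SimpleGraph.fromEdgeSet S).induce {v : V | v ∉ T}) →g G :=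
    ⟨Subtype.val, by
      intro a b hab
      have hab' : (SimpleGraph.fromEdgeSet S).Adj a.1 b.1 := hab
      rw [SimpleGraph.fromEdgeSet_adj] at hab'
      have h1 := hab'.1.1
      rwa [SimpleGraph.mem_edgeSet] at h1⟩
  set Cg : G.Walk x.1 x.1 := c.map f with hCgdef
  have hCg : Cg.IsCycle := hc.map Subtype.val_injective
  -- vertices of the cycle avoid T
  have hCT : ∀ y ∈ Cg.support, y ∉ T := by
    intro y hy
    rw [hCgdef, Walk.support_map] at hy
    obtain ⟨z, _, rfl⟩ := List.mem_map.mp hy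
    exact z.2
  -- edges of the cycle are in S
  have hCe : ∀ e ∈ Cg.edges, e ∈ S := by
    intro e he
    rw [hCgdef, Walk.edges_map] at he
    obtain ⟨e', he', rfl⟩ := List.mem_map.mp he
    revert he'
    induction e' using Sym2.ind with
    | _ a b =>
      intro he'
      have hadj := c.adj_of_mem_edges he'
      have hadj' : (SimpleGraph.fromEdgeSet S).Adj a.1 b.1 := hadj
      rw [SimpleGraph.fromEdgeSet_adj] at hadj'
      exact hadj'.1
  -- pick an edge of the cycle; it lies on some s-t path P
  have hene : Cg.edges ≠ [] := by
    intro hnil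
    have h3 := hCg.three_le_length
    rw [← Walk.length_edges, hnil] at h3
    simp at h3
  obtain ⟨e, he⟩ := List.exists_mem_of_ne_nil _ hene
  obtain ⟨u, v, rfl⟩ : ∃ u v, e = s(u, v) := Sym2.ind (fun u v => ⟨u, v, rfl⟩) e
  have heS := hCe _ he
  have huvAdj : G.Adj u v := by
    have h1 := heS.1
    rwa [SimpleGraph.mem_edgeSet] at h1
  have hune : u ≠ v := huvAdj.ne
  obtain ⟨P, hPe⟩ := heS.2
  have huP : u ∈ P.1.support := P.1.fst_mem_support_of_mem_edges hPe
  have hvP : v ∈ P.1.support := P.1.snd_mem_support_of_mem_edges hPe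
  have huC : u ∈ Cg.support := Cg.fst_mem_support_of_mem_edges he
  have hvC : v ∈ Cg.support := Cg.snd_mem_support_of_mem_edges he
  -- split P at the first vertex meeting the cycle
  obtain ⟨a, haC, A, M0, hPdec, hA⟩ :=
    first_split (fun y => y ∈ Cg.support) P.1 ⟨u, huP, huC⟩
  have hPpath : (A.append M0).IsPath := hPdec ▸ P.2
  have hApath : A.IsPath := hPpath.of_append_left
  have hM0path : M0.IsPath := hPpath.of_append_right
  -- one of u, v is in the support of M0
  have hM0wit : ∃ y ∈ M0.support, y ∈ Cg.support := by
    have key : ∀ y, y ∈ P.1.support → y ∈ Cg.support → y ∉ M0.support → y = a := by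
      intro y hyP hyC hyM
      rw [hPdec, Walk.support_append, List.mem_append] at hyP
      rcases hyP with hyA | hyT
      · exact hA y hyA hyC
      · exact absurd (List.mem_of_mem_tail hyT) hyM
    by_cases hu' : u ∈ M0.support
    · exact ⟨u, hu', huC⟩
    by_cases hv' : v ∈ M0.support
    · exact ⟨v, hv', hvC⟩
    exact absurd ((key u huP huC hu').trans (key v hvP hvC hv').symm) hune
  obtain ⟨b, hbC, M, B, hM0dec, hB⟩ := last_split (fun y => y ∈ Cg.support) M0 hM0wit
  have hMBpath : (M.append B).IsPath := hM0dec ▸ hM0path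
  have hBpath : B.IsPath := hMBpath.of_append_right
  have hPdec2 : P.1 = A.append (M.append B) := by rw [hPdec, hM0dec]
  have hPnodup : (A.append (M.append B)).support.Nodup := by
    rw [← hPdec2]; exact P.2.support_nodup
  rw [Walk.support_append, Walk.tail_support_append] at hPnodup
  have hPnodup' := List.nodup_append'.mp hPnodup
  -- a ≠ b
  have hab : a ≠ b := by
    rintro rfl
    have hMnil : M = Walk.nil := by
      by_contra hMn
      have haM : a ∈ M.support.tail := walk_end_mem_tail M hMn
      exact (hPnodup'.2.2 A.end_mem_support) (List.mem_append_left _ haM)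
    have hsup : ∀ y ∈ P.1.support, y ∈ Cg.support → y = a := by
      intro y hy hyC
      rw [hPdec2, hMnil, Walk.nil_append, Walk.support_append, List.mem_append] at hy
      rcases hy with hy | hy
      · exact hA y hy hyC
      · exact hB y (List.mem_of_mem_tail hy) hyC
    exact hune ((hsup u huP huC).trans (hsup v hvP hvC).symm)
  -- rotate the cycle to start at a, and find b on it
  have hC'' : (Cg.rotate a haC).IsCycle := hCg.rotate haC
  have hrot := Walk.support_rotate Cg a haC
  have hbtail : b ∈ Cg.support.tail := by
    rcases (by rwa [Cg.support_eq_cons, List.mem_cons] at hbC :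
        b = x.1 ∨ b ∈ Cg.support.tail) with hbx | hbt
    · rw [hbx]; exact walk_end_mem_tail Cg hCg.ne_nil
    · exact hbt
  have hbC'' : b ∈ (Cg.rotate a haC).support := by
    rw [Walk.support_eq_cons, List.mem_cons]
    exact Or.inr (hrot.mem_iff.mpr hbtail)
  set D1 : G.Walk a b := (Cg.rotate a haC).takeUntil b hbC'' with hD1def
  set D2' : G.Walk b a := (Cg.rotate a haC).dropUntil b hbC'' with hD2'def
  have hspec : D1.append D2' = Cg.rotate a haC := (Cg.rotate a haC).take_spec hbC''
  have htail : (Cg.rotate a haC).support.tail = D1.support.tail ++ D2'.support.tail := by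
    rw [← hspec, Walk.tail_support_append]
  have htailnodup : (D1.support.tail ++ D2'.support.tail).Nodup := by
    rw [← htail]; exact hC''.support_nodup
  have htn := List.nodup_append'.mp htailnodup
  have hbD1 : b ∈ D1.support.tail := Walk.end_mem_tail_support_of_ne hab D1
  have haD2' : a ∈ D2'.support.tail := Walk.end_mem_tail_support_of_ne (Ne.symm hab) D2'
  have haD1 : a ∉ D1.support.tail := fun h => htn.2.2 h haD2'
  have hbD2' : b ∉ D2'.support.tail := fun h => htn.2.2 hbD1 h
  have hD1path : D1.IsPath := by
    rw [Walk.isPath_def, Walk.support_eq_cons]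
    exact List.nodup_cons.mpr ⟨haD1, htn.1⟩
  have hD2'path : D2'.IsPath := by
    rw [Walk.isPath_def, Walk.support_eq_cons]
    exact List.nodup_cons.mpr ⟨hbD2', htn.2.1⟩
  set D2 : G.Walk a b := D2'.reverse with hD2def
  have hD2path : D2.IsPath := hD2'path.reverse
  -- membership in the rotated cycle gives membership in Cg
  have hsubC : ∀ y ∈ (Cg.rotate a haC).support, y ∈ Cg.support := by
    intro y hy
    rw [Walk.support_eq_cons, List.mem_cons] at hy
    rcases hy with rfl | hy
    · exact haC
    · exact List.mem_of_mem_tail (hrot.mem_iff.mp hy)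
  have hD1sub : ∀ y ∈ D1.support, y ∈ Cg.support := fun y hy =>
    hsubC y (Walk.support_takeUntil_subset _ hbC'' hy)
  have hD2sub : ∀ y ∈ D2.support, y ∈ Cg.support := by
    intro y hy
    rw [hD2def, Walk.support_reverse, List.mem_reverse] at hy
    exact hsubC y (Walk.support_dropUntil_subset _ hbC'' hy)
  have haD2 : a ∉ D2.support.tail := by
    have := hD2path.support_nodup
    rw [Walk.support_eq_cons, List.nodup_cons] at this
    exact this.1
  have hbB : b ∉ B.support.tail := by
    have := hBpath.support_nodup
    rw [Walk.support_eq_cons, List.nodup_cons] at this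
    exact this.1
  have hAB : ∀ y ∈ A.support, y ∉ B.support.tail := by
    intro y hyA hyB
    exact hPnodup'.2.2 hyA (List.mem_append_right _ hyB)
  -- gluing: A + D + B is a path for D ∈ {D1, D2}
  have glue : ∀ (D : G.Walk a b), D.IsPath → (∀ y ∈ D.support, y ∈ Cg.support) →
      a ∉ D.support.tail → (A.append (D.append B)).IsPath := by
    intro D hDp hDsub haD
    rw [Walk.isPath_def, Walk.support_append, Walk.tail_support_append]
    have hDtn : D.support.tail.Nodup := by
      have := hDp.support_nodup
      rw [Walk.support_eq_cons, List.nodup_cons] at this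
      exact this.2
    have hBtn : B.support.tail.Nodup := by
      have h2 := hBpath.support_nodup
      rw [Walk.support_eq_cons, List.nodup_cons] at h2
      exact h2.2
    refine List.nodup_append'.mpr ⟨hApath.support_nodup, List.nodup_append'.mpr
      ⟨hDtn, hBtn, ?_⟩, ?_⟩
    · intro y hyD hyB
      have : y = b := hB y (List.mem_of_mem_tail hyB)
        (hDsub y (List.mem_of_mem_tail hyD))
      exact hbB (this ▸ hyB)
    · intro y hyA hy
      rcases List.mem_append.mp hy with hyD | hyB
      · have : y = a := hA y hyA (hDsub y (List.mem_of_mem_tail hyD))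
        exact haD (this ▸ hyD)
      · exact hAB y hyA hyB
  have hQ1path := glue D1 hD1path hD1sub haD1
  have hQ2path := glue D2 hD2path hD2sub haD2
  -- the two paths have the same trace
  have trace : ∀ (D : G.Walk a b), (∀ y ∈ D.support, y ∈ Cg.support) →
      (A.append (D.append B)).support.filter (· ∈ T) =
        A.support.filter (· ∈ T) ++ B.support.tail.filter (· ∈ T) := by
    intro D hDsub
    rw [Walk.support_append, Walk.tail_support_append, List.filter_append,
      List.filter_append]
    have : D.support.tail.filter (· ∈ T) = [] := by
      apply List.filter_eq_nil_iff.mpr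
      intro y hy
      simpa using hCT y (hDsub y (List.mem_of_mem_tail hy))
    rw [this, List.nil_append]
  have htr : (A.append (D1.append B)).support.filter (· ∈ T) =
      (A.append (D2.append B)).support.filter (· ∈ T) := by
    rw [trace D1 hD1sub, trace D2 hD2sub]
  have hQeq := hT ⟨A.append (D1.append B), hQ1path⟩ ⟨A.append (D2.append B), hQ2path⟩ htr
  have hWeq : A.append (D1.append B) = A.append (D2.append B) :=
    congrArg Subtype.val hQeq
  -- derive a contradiction: the two arcs of the cycle are distinct
  have hsupeq := congrArg Walk.support hWeq
  rw [Walk.support_append, Walk.tail_support_append, Walk.support_append,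
    Walk.tail_support_append] at hsupeq
  have h1 := List.append_cancel_left hsupeq
  have hDt : D1.support.tail = D2.support.tail := List.append_cancel_right h1
  -- lengths
  have hlenrot : (Cg.rotate a haC).length = Cg.length := by
    have := (Cg.rotate_edges a haC).perm.length_eq
    rwa [Walk.length_edges, Walk.length_edges] at this
  have hlensum : D1.length + D2'.length = Cg.length := by
    rw [← hlenrot, ← hspec, Walk.length_append]
  have hlen12 : D1.length = D2'.length := by
    have h2 := congrArg List.length hDt
    rw [hD2def, Walk.support_reverse] at h2
    have e1 : D1.support.tail.length = D1.length := by
      rw [List.length_tail, Walk.length_support]; omega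
    have e2 : D2'.support.reverse.tail.length = D2'.length := by
      have : D2'.support.reverse.length = D2'.length + 1 := by
        rw [List.length_reverse, Walk.length_support]
      cases hrev : D2'.support.reverse with
      | nil => rw [hrev] at this; simp at this
      | cons z zs =>
        rw [hrev] at this
        simpa using Nat.succ_injective this
    rw [e1, e2] at h2
    exact h2
  have hD1len2 : 2 ≤ D1.length := by
    have h3 := hCg.three_le_length
    omega
  -- every element of D1.support.tail equals b
  have hallb : ∀ y ∈ D1.support.tail, y = b := by
    intro y hy
    have hy2 : y ∈ D2.support.tail := hDt ▸ hy
    have hy3 : y ∈ D2'.support := by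
      have h4 := List.mem_of_mem_tail hy2
      simpa [hD2def, Walk.support_reverse] using h4
    rw [Walk.support_eq_cons, List.mem_cons] at hy3
    rcases hy3 with rfl | hy3
    · rfl
    · exact absurd hy3 (fun h => htn.2.2 hy h)
  -- but D1.support.tail has ≥ 2 distinct elements
  have hlent : 2 ≤ D1.support.tail.length := by
    have e1 : D1.support.tail.length = D1.length := by
      rw [List.length_tail, Walk.length_support]; omega
    omega
  cases hc1 : D1.support.tail with
  | nil => rw [hc1] at hlent; simp at hlent
  | cons z zs =>
    cases hc2 : zs with
    | nil => rw [hc1, hc2] at hlent; simp at hlent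
    | cons z' zs' =>
      have hz : z = b := hallb z (by rw [hc1]; exact List.mem_cons_self)
      have hz' : z' = b := hallb z' (by
        rw [hc1, hc2]
        exact List.mem_cons_of_mem _ (List.mem_cons_self))
      have hnodup : (z :: zs).Nodup := hc1 ▸ htn.1
      rw [hc2, hz, hz'] at hnodup
      exact (List.nodup_cons.mp hnodup).1 (List.mem_cons_self)
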